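/- A linear map λ : T_n(q) → k is a partial action of the Taft algebra T_n(q) on k if and only if λ = ε (the counit, i.e. the global action), or λ = λ_N^0 for some non-trivial subgroup N of the group ⟨g⟩ ≅ C_n of group-like elements (i.e. {1} ≠ N ≠ ⟨g⟩), or λ = λ_α for some α ∈ k. (Theorem 3.1.1) -/

import Mathlib

open scoped TensorProduct

/-- The Gaussian binomial coefficient `binom(m, ℓ)_q` in a field `k`, defined by
`binom(0,0)_q = 1`, `binom(m,ℓ)_q = 0` for `ℓ < 0` or `ℓ > m`, and the q-Pascal rule
`binom(i,s)_q = binom(i-1,s-1)_q + q^s · binom(i-1,s)_q` for `i ≥ 1`. -/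
def qbinom {k : Type*} [Field k] (q : k) : ℕ → ℤ → k
  | 0, s => if s = 0 then 1 else 0
  | (i + 1), s => qbinom q i (s - 1) + q ^ s.toNat * qbinom q i s

/-- The q-number `(m)_q = 1 + q + ⋯ + q^{m−1}`. -/
def qnum {k : Type*} [Field k] (q : k) (m : ℕ) : k := ∑ l ∈ Finset.range m, q ^ l

/-- The q-factorial `(m)_q! = (m)_q (m−1)_q ⋯ (1)_q`, with `(0)_q! = 1`. -/
def qfact {k : Type*} [Field k] (q : k) : ℕ → k
  | 0 => 1
  | (m + 1) => qnum q (m + 1) * qfact q m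

/-- The linear map `h ↦ Σ λ(h₁) h₂` (Sweedler notation). -/
noncomputable def lCont (k H : Type*) [CommSemiring k] [Semiring H] [Bialgebra k H]
    (lam : H →ₗ[k] k) : H →ₗ[k] H :=
  (TensorProduct.lid k H).toLinearMap ∘ₗ TensorProduct.map lam LinearMap.id ∘ₗ Coalgebra.comul

/-- The linear map `h ↦ Σ h₁ λ(h₂)` (Sweedler notation). -/
noncomputable def rCont (k H : Type*) [CommSemiring k] [Semiring H] [Bialgebra k H]
    (lam : H →ₗ[k] k) : H →ₗ[k] H :=
  (TensorProduct.rid k H).toLinearMap ∘ₗ TensorProduct.map LinearMap.id lam ∘ₗ Coalgebra.comul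

/-- A partial action of a bialgebra `H` on its base field `k`: a linear map `λ : H → k` with
`λ(1) = 1` and `λ(h)λ(y) = Σ λ(h₁)λ(h₂y)` for all `h, y ∈ H`; by linearity the right-hand side
is `λ((Σ λ(h₁) h₂) · y)`. -/
def IsPartialAction (k H : Type*) [CommSemiring k] [Semiring H] [Bialgebra k H]
    (lam : H →ₗ[k] k) : Prop :=
  lam 1 = 1 ∧ ∀ h y : H, lam h * lam y = lam (lCont k H lam h * y)

/-- A symmetric partial action additionally satisfies `λ(h)λ(y) = Σ λ(h₁y)λ(h₂)`, i.e.
`λ(h)λ(y) = λ((Σ h₁ λ(h₂)) · y)`. -/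
def IsSymmPartialAction (k H : Type*) [CommSemiring k] [Semiring H] [Bialgebra k H]
    (lam : H →ₗ[k] k) : Prop :=
  IsPartialAction k H lam ∧ ∀ h y : H, lam h * lam y = lam (rCont k H lam h * y)

/-- A realization of the Taft algebra `T_n(q)`: a Hopf algebra `H` over `k` with generators
`g, x` satisfying `g^n = 1`, `x^n = 0`, `xg = q·gx`, such that `{g^i x^j : 0 ≤ i,j ≤ n−1}` is a
`k`-basis, `g` is group-like and `x` is `(1,g)`-primitive. -/
structure TaftData (k : Type*) [Field k] (n : ℕ) (q : k) (H : Type*)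
    [Ring H] [HopfAlgebra k H] where
  g : H
  x : H
  g_pow_n : g ^ n = 1
  x_pow_n : x ^ n = 0
  x_mul_g : x * g = q • (g * x)
  basis : Module.Basis (Fin n × Fin n) k H
  basis_eq : ∀ i j : Fin n, basis (i, j) = g ^ (i : ℕ) * x ^ (j : ℕ)
  comul_g : Coalgebra.comul (R := k) g = g ⊗ₜ[k] g
  comul_x : Coalgebra.comul (R := k) x = x ⊗ₜ[k] (1 : H) + g ⊗ₜ[k] x
  counit_g : Coalgebra.counit (R := k) g = 1
  counit_x : Coalgebra.counit (R := k) x = 0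

section QBinom

variable {k : Type*} [Field k] (q : k)

theorem qbinom_of_neg (m : ℕ) : ∀ s : ℤ, s < 0 → qbinom q m s = 0 := by
  induction m with
  | zero => intro s hs; simp [qbinom, hs.ne]
  | succ m ih =>
    intro s hs
    have h1 : s - 1 < 0 := by omega
    simp [qbinom, ih _ hs, ih _ h1]

theorem qbinom_of_gt (m : ℕ) : ∀ s : ℤ, (m : ℤ) < s → qbinom q m s = 0 := by
  induction m with
  | zero => intro s hs; simp [qbinom]; omega
  | succ m ih =>
    intro s hs
    have h1 : (m : ℤ) < s - 1 := by push_cast at hs ⊢; omega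
    have h2 : (m : ℤ) < s := by push_cast at hs; omega
    simp [qbinom, ih _ h1, ih _ h2]

@[simp] theorem qbinom_zero_right (m : ℕ) : qbinom q m 0 = 1 := by
  induction m with
  | zero => simp [qbinom]
  | succ m ih => simp [qbinom, ih, qbinom_of_neg q m (-1) (by norm_num)]

@[simp] theorem qbinom_self (m : ℕ) : qbinom q m (m : ℤ) = 1 := by
  induction m with
  | zero => simp [qbinom]
  | succ m ih =>
    have : ((m : ℤ) + 1) - 1 = (m : ℤ) := by ring
    simp [qbinom, this, ih, qbinom_of_gt q m (m+1) (by omega)]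

theorem qbinom_succ (m : ℕ) (s : ℤ) :
    qbinom q (m + 1) s = qbinom q m (s - 1) + q ^ s.toNat * qbinom q m s := rfl

theorem qnum_add (s t : ℕ) : qnum q (s + t) = qnum q s + q ^ s * qnum q t := by
  simp [qnum, Finset.sum_range_add, Finset.mul_sum, pow_add]

theorem qbinom_mul_qfact (m : ℕ) : ∀ s : ℕ, s ≤ m →
    qbinom q m (s : ℤ) * (qfact q s * qfact q (m - s)) = qfact q m := by
  induction m with
  | zero => intro s hs; interval_cases s; simp [qbinom, qfact]
  | succ m ih =>
    intro s hs
    rcases Nat.eq_zero_or_pos s with rfl | hpos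
    · simp [qfact]
    obtain ⟨t, rfl⟩ := Nat.exists_eq_add_of_le hpos
    have h1 : ((1 + t : ℕ) : ℤ) - 1 = (t : ℤ) := by push_cast; ring
    have htoNat : ((1 + t : ℕ) : ℤ).toNat = 1 + t := by omega
    rw [qbinom_succ, h1, htoNat, add_mul]
    rcases Nat.lt_or_ge m (1 + t) with hlt | hge
    · -- s = m + 1, i.e. t = m
      have ht : m = t := by omega
      subst ht
      rw [qbinom_of_gt q m (1 + m : ℕ) (by push_cast; omega)]
      have : m + 1 - (1 + m) = 0 := by omega
      simp only [this, qfact, mul_zero, zero_mul, add_zero]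
      have := ih m le_rfl
      simp only [Nat.sub_self] at this
      calc qbinom q m (m : ℤ) * (qfact q (1 + m) * qfact q 0)
          = qnum q (m+1) * (qbinom q m (m:ℤ) * (qfact q m * qfact q 0)) := by
            rw [show (1+m) = m+1 by omega,
              show qfact q (m+1) = qnum q (m+1) * qfact q m from rfl]; ring
        _ = qfact q (m+1) := by rw [this]; rfl
    · have key1 := ih t (by omega)
      have key2 := ih (1 + t) hge
      have e1 : m + 1 - (1 + t) = m - t := by omega
      rw [e1]
      have e2 : m - t = (m - (1+t)) + 1 := by omega
      -- qfact q s = qnum q s * qfact q (s-1)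
      have f1 : qfact q (1 + t) = qnum q (1+t) * qfact q t := by
        rw [show (1+t) = t+1 by omega]; rfl
      have f2 : qfact q (m - t) = qnum q (m - t) * qfact q (m - (1+t)) := by
        rw [e2]; rfl
      have goal1 : qbinom q m (t : ℤ) * (qfact q (1+t) * qfact q (m - t))
          = qnum q (1+t) * qfact q m := by
        rw [f1]
        calc qbinom q m (t:ℤ) * (qnum q (1+t) * qfact q t * qfact q (m-t))
            = qnum q (1+t) * (qbinom q m (t:ℤ) * (qfact q t * qfact q (m-t))) := by ring
          _ = qnum q (1+t) * qfact q m := by rw [key1]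
      have goal2 : q ^ (1+t) * qbinom q m ((1+t : ℕ) : ℤ) * (qfact q (1+t) * qfact q (m - t))
          = q ^ (1+t) * qnum q (m - t) * qfact q m := by
        rw [f2]
        calc q ^ (1+t) * qbinom q m ((1+t:ℕ):ℤ) * (qfact q (1+t) * (qnum q (m-t) * qfact q (m - (1+t))))
            = q ^ (1+t) * qnum q (m-t) * (qbinom q m ((1+t:ℕ):ℤ) * (qfact q (1+t) * qfact q (m - (1+t)))) := by ring
          _ = _ := by rw [key2]
      push_cast at goal1 goal2 ⊢
      rw [goal1, goal2]
      have : qnum q (1+t) + q^(1+t) * qnum q (m - t) = qnum q (m+1) := by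
        rw [← qnum_add q (1+t) (m-t), show 1 + t + (m - t) = m + 1 by omega]
      calc qnum q (1+t) * qfact q m + q^(1+t) * qnum q (m-t) * qfact q m
          = (qnum q (1+t) + q^(1+t) * qnum q (m - t)) * qfact q m := by ring
        _ = qnum q (m+1) * qfact q m := by rw [this]
        _ = qfact q (m+1) := rfl

end QBinom
section Commutation

variable {k : Type*} [Field k] {R : Type*} [Ring R] [Algebra k R] (q : k)

theorem qcomm_pow_right {X G : R} (h : X * G = q • (G * X)) (m : ℕ) :
    X * G ^ m = q ^ m • (G ^ m * X) := by
  induction m with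
  | zero => simp
  | succ m ih =>
    rw [pow_succ, ← mul_assoc, ih, smul_mul_assoc, mul_assoc, h, pow_succ,
      mul_smul_comm, smul_smul, mul_assoc]

theorem qcomm_pow_pow {X G : R} (h : X * G = q • (G * X)) (e m : ℕ) :
    X ^ e * G ^ m = (q ^ (m * e)) • (G ^ m * X ^ e) := by
  induction e with
  | zero => simp
  | succ e ih =>
    rw [pow_succ, mul_assoc, qcomm_pow_right q h m, mul_smul_comm, ← mul_assoc, ih,
      smul_mul_assoc, smul_smul, ← pow_add, mul_assoc, ← pow_succ]
    congr 2
    ring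

theorem qbinom_expand {A B : R} (h : A * B = q • (B * A)) (m : ℕ) :
    (A + B) ^ m = ∑ ℓ ∈ Finset.range (m + 1),
      qbinom q m (ℓ : ℤ) • (B ^ ℓ * A ^ (m - ℓ)) := by
  induction m with
  | zero => simp
  | succ m ih =>
    have hA : ∀ ℓ : ℕ, A * B ^ ℓ = q ^ ℓ • (B ^ ℓ * A) := by
      intro ℓ
      have := qcomm_pow_pow q h 1 ℓ
      simpa using this
    rw [pow_succ', ih, Finset.mul_sum]
    have lhs_eq : ∀ ℓ ∈ Finset.range (m+1),
        (A + B) * (qbinom q m (ℓ:ℤ) • (B ^ ℓ * A ^ (m - ℓ)))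
        = (q ^ ℓ * qbinom q m (ℓ:ℤ)) • (B ^ ℓ * A ^ (m - ℓ + 1))
          + qbinom q m (ℓ:ℤ) • (B ^ (ℓ+1) * A ^ (m - ℓ)) := by
      intro ℓ _
      have e1 : A * (B ^ ℓ * A ^ (m - ℓ)) = q ^ ℓ • (B ^ ℓ * A ^ (m - ℓ + 1)) := by
        rw [← mul_assoc, hA ℓ, smul_mul_assoc, mul_assoc, ← pow_succ']
      have e2 : B * (B ^ ℓ * A ^ (m - ℓ)) = B ^ (ℓ+1) * A ^ (m - ℓ) := by
        rw [← mul_assoc, ← pow_succ']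
      rw [mul_smul_comm, add_mul, smul_add, e1, e2, smul_smul,
        mul_comm (qbinom q m (ℓ:ℤ)) (q ^ ℓ)]
    rw [Finset.sum_congr rfl lhs_eq, Finset.sum_add_distrib]
    have rhs_eq : ∀ s ∈ Finset.range (m+2),
        qbinom q (m+1) (s:ℤ) • (B ^ s * A ^ (m + 1 - s))
        = qbinom q m ((s:ℤ) - 1) • (B ^ s * A ^ (m + 1 - s))
          + (q ^ s * qbinom q m (s:ℤ)) • (B ^ s * A ^ (m + 1 - s)) := by
      intro s _
      have e : ((s:ℤ)).toNat = s := by omega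
      rw [qbinom_succ, e, add_smul]
    rw [Finset.sum_congr rfl rhs_eq, Finset.sum_add_distrib]
    have goalA : ∑ s ∈ Finset.range (m+2), qbinom q m ((s:ℤ) - 1) • (B ^ s * A ^ (m + 1 - s))
        = ∑ ℓ ∈ Finset.range (m+1), qbinom q m (ℓ:ℤ) • (B ^ (ℓ+1) * A ^ (m - ℓ)) := by
      rw [Finset.sum_range_succ']
      simp only [Nat.cast_zero, zero_sub, qbinom_of_neg q m (-1) (by norm_num), zero_smul,
        add_zero]
      apply Finset.sum_congr rfl
      intro ℓ _
      have e : ((ℓ+1 : ℕ) : ℤ) - 1 = (ℓ:ℤ) := by push_cast; ring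
      rw [e, Nat.add_sub_add_right]
    have goalB : ∑ s ∈ Finset.range (m+2), (q ^ s * qbinom q m (s:ℤ)) • (B ^ s * A ^ (m + 1 - s))
        = ∑ ℓ ∈ Finset.range (m+1), (q ^ ℓ * qbinom q m (ℓ:ℤ)) • (B ^ ℓ * A ^ (m - ℓ + 1)) := by
      rw [Finset.sum_range_succ]
      have e0 : qbinom q m ((m+1 : ℕ) : ℤ) = 0 := qbinom_of_gt q m _ (by push_cast; omega)
      rw [e0, mul_zero, zero_smul, add_zero]
      apply Finset.sum_congr rfl
      intro ℓ hl
      rw [Finset.mem_range] at hl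
      have e : m + 1 - ℓ = m - ℓ + 1 := by omega
      rw [e]
    rw [← goalA, ← goalB, add_comm]

end Commutation
section Commutation2

variable {k : Type*} [Field k] {R : Type*} [Ring R] [Algebra k R] (q : k)

theorem mono_mul {G X : R} (h : X * G = q • (G * X)) (i j c d : ℕ) :
    (G ^ i * X ^ j) * (G ^ c * X ^ d) = q ^ (c * j) • (G ^ (i + c) * X ^ (j + d)) := by
  calc (G ^ i * X ^ j) * (G ^ c * X ^ d) = G ^ i * (X ^ j * G ^ c) * X ^ d := by
        rw [mul_assoc, mul_assoc, mul_assoc]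
    _ = G ^ i * (q ^ (c * j) • (G ^ c * X ^ j)) * X ^ d := by rw [qcomm_pow_pow q h j c]
    _ = q ^ (c * j) • (G ^ (i + c) * X ^ (j + d)) := by
        rw [mul_smul_comm, smul_mul_assoc, pow_add, pow_add]
        congr 1
        noncomm_ring

end Commutation2

section TaftLemmas

variable {k H : Type*} [Field k] [Ring H] [HopfAlgebra k H]
  {n : ℕ} {q : k} (T : TaftData k n q H)

theorem Taft.x_pow_eq_zero {j : ℕ} (hj : n ≤ j) : T.x ^ j = 0 := by
  obtain ⟨m, rfl⟩ := Nat.exists_eq_add_of_le hj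
  rw [pow_add, T.x_pow_n, zero_mul]

theorem Taft.g_pow_add_n (i : ℕ) : T.g ^ (i + n) = T.g ^ i := by
  rw [pow_add, T.g_pow_n, mul_one]

theorem Taft.g_pow_mod (i : ℕ) : T.g ^ i = T.g ^ (i % n) := by
  conv_lhs => rw [← Nat.mod_add_div i n, pow_add, pow_mul, T.g_pow_n, one_pow, mul_one]

theorem Taft.mono_mul' (i j c d : ℕ) :
    (T.g ^ i * T.x ^ j) * (T.g ^ c * T.x ^ d)
      = q ^ (c * j) • (T.g ^ (i + c) * T.x ^ (j + d)) :=
  mono_mul q T.x_mul_g i j c d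

theorem Taft.comul_mono (i j : ℕ) :
    Coalgebra.comul (R := k) (T.g ^ i * T.x ^ j)
      = ∑ ℓ ∈ Finset.range (j + 1), qbinom q j (ℓ : ℤ) •
          ((T.g ^ (i + ℓ) * T.x ^ (j - ℓ)) ⊗ₜ[k] (T.g ^ i * T.x ^ ℓ)) := by
  have hc : Coalgebra.comul (R := k) (T.g ^ i * T.x ^ j)
      = (Bialgebra.comulAlgHom k H) (T.g ^ i) * (Bialgebra.comulAlgHom k H) (T.x ^ j) := by
    rw [← map_mul]; rfl
  rw [hc, map_pow, map_pow, Bialgebra.comulAlgHom_apply, Bialgebra.comulAlgHom_apply,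
    T.comul_g, T.comul_x]
  have hgi : (T.g ⊗ₜ[k] T.g) ^ i = (T.g ^ i) ⊗ₜ[k] (T.g ^ i) :=
    Algebra.TensorProduct.tmul_pow _ _ i
  have hAB : (T.x ⊗ₜ[k] (1:H)) * (T.g ⊗ₜ[k] T.x)
      = q • ((T.g ⊗ₜ[k] T.x) * (T.x ⊗ₜ[k] (1:H))) := by
    rw [Algebra.TensorProduct.tmul_mul_tmul, Algebra.TensorProduct.tmul_mul_tmul,
      T.x_mul_g, one_mul, mul_one, TensorProduct.smul_tmul']
  rw [hgi, qbinom_expand q hAB j, Finset.mul_sum]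
  apply Finset.sum_congr rfl
  intro ℓ _
  rw [mul_smul_comm]
  congr 1
  rw [Algebra.TensorProduct.tmul_pow, Algebra.TensorProduct.tmul_pow,
    Algebra.TensorProduct.tmul_mul_tmul, Algebra.TensorProduct.tmul_mul_tmul,
    one_pow, mul_one, ← mul_assoc, ← pow_add]

theorem Taft.counit_mono (i j : ℕ) :
    Coalgebra.counit (R := k) (T.g ^ i * T.x ^ j) = if j = 0 then 1 else 0 := by
  have hc : Coalgebra.counit (R := k) (T.g ^ i * T.x ^ j)
      = (Bialgebra.counitAlgHom k H) (T.g ^ i) * (Bialgebra.counitAlgHom k H) (T.x ^ j) := by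
    rw [← map_mul]; rfl
  rw [hc, map_pow, map_pow, Bialgebra.counitAlgHom_apply, Bialgebra.counitAlgHom_apply,
    T.counit_g, T.counit_x, one_pow, one_mul]
  cases j with
  | zero => simp
  | succ m => simp [zero_pow]

theorem Taft.lCont_mono (lam : H →ₗ[k] k) (i j : ℕ) :
    lCont k H lam (T.g ^ i * T.x ^ j)
      = ∑ ℓ ∈ Finset.range (j + 1),
          (qbinom q j (ℓ : ℤ) * lam (T.g ^ (i + ℓ) * T.x ^ (j - ℓ))) • (T.g ^ i * T.x ^ ℓ) := by
  rw [lCont, LinearMap.comp_apply, LinearMap.comp_apply, Taft.comul_mono T i j, map_sum,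
    map_sum]
  apply Finset.sum_congr rfl
  intro ℓ _
  rw [map_smul, map_smul, TensorProduct.map_tmul, LinearMap.id_apply]
  simp [TensorProduct.lid_tmul, smul_smul]

theorem Taft.master {lam : H →ₗ[k] k} (hlam : IsPartialAction k H lam) (i j c d : ℕ) :
    lam (T.g ^ i * T.x ^ j) * lam (T.g ^ c * T.x ^ d)
      = ∑ ℓ ∈ Finset.range (j + 1),
          qbinom q j (ℓ : ℤ) * lam (T.g ^ (i + ℓ) * T.x ^ (j - ℓ)) * q ^ (c * ℓ)
            * lam (T.g ^ (i + c) * T.x ^ (ℓ + d)) := by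
  rw [hlam.2 (T.g ^ i * T.x ^ j) (T.g ^ c * T.x ^ d), Taft.lCont_mono T lam i j,
    Finset.sum_mul, map_sum]
  apply Finset.sum_congr rfl
  intro ℓ _
  rw [smul_mul_assoc, map_smul, Taft.mono_mul' T i ℓ c d, map_smul, smul_eq_mul, smul_eq_mul]
  ring

end TaftLemmas
section Forward

variable {k H : Type*} [Field k] [Ring H] [HopfAlgebra k H]
  {n : ℕ} {q : k} (T : TaftData k n q H) (lam : H →ₗ[k] k)

/-- Values of `lam` on the monomials. -/
def Lv (i j : ℕ) : k := lam (T.g ^ i * T.x ^ j)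

theorem lv_pn (i j : ℕ) : Lv T lam (i + n) j = Lv T lam i j := by
  unfold Lv; rw [Taft.g_pow_add_n]

theorem lv_top (i j : ℕ) (hj : n ≤ j) : Lv T lam i j = 0 := by
  unfold Lv; rw [Taft.x_pow_eq_zero T hj, mul_zero, map_zero]

theorem lv_one (hlam : IsPartialAction k H lam) : Lv T lam 0 0 = 1 := by
  unfold Lv; simpa using hlam.1

theorem lv_en (hlam : IsPartialAction k H lam) : Lv T lam n 0 = 1 := by
  have := lv_pn T lam 0 0
  rw [zero_add] at this
  rw [this, lv_one T lam hlam]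

theorem lv_M0 (hlam : IsPartialAction k H lam) (i c : ℕ) :
    Lv T lam i 0 * Lv T lam c 0 = Lv T lam i 0 * Lv T lam (i + c) 0 := by
  have := Taft.master T hlam i 0 c 0
  simpa [Lv] using this

theorem lv_R1 (hlam : IsPartialAction k H lam) (i c d : ℕ) :
    Lv T lam i 1 * Lv T lam c d = Lv T lam i 1 * Lv T lam (i + c) d
      + Lv T lam (i + 1) 0 * (q ^ c * Lv T lam (i + c) (1 + d)) := by
  have hM := Taft.master T hlam i 1 c d
  rw [Finset.sum_range_succ, Finset.sum_range_one] at hM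
  have q11 : qbinom q 1 (1:ℤ) = 1 := by exact_mod_cast qbinom_self q 1
  norm_num [q11] at hM
  unfold Lv
  norm_num
  linear_combination hM

theorem lv_KR (hn : 2 ≤ n) (hlam : IsPartialAction k H lam) (c d : ℕ) :
    q ^ c * Lv T lam (c + (n-1)) (1 + d)
      = Lv T lam (n-1) 1 * (Lv T lam c d - Lv T lam (c + (n-1)) d) := by
  have h := lv_R1 T lam hlam (n-1) c d
  rw [show n - 1 + 1 = n by omega, lv_en T lam hlam,
    show n - 1 + c = c + (n - 1) by omega] at h
  rw [mul_sub]
  linear_combination -h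

end Forward
theorem nat_tri (s : ℕ) : (s+1)*(s+2)/2 = s*(s+1)/2 + (s+1) := by
  have h : (s+1)*(s+2) = s*(s+1) + 2*(s+1) := by ring
  rw [h, Nat.add_mul_div_left _ _ (by norm_num : (0:ℕ) < 2)]

theorem Taft.classify {k H : Type*} [Field k] [Ring H] [HopfAlgebra k H]
    {n : ℕ} (hn : 2 ≤ n) {q : k} (hq : IsPrimitiveRoot q n)
    (T : TaftData k n q H) (lam : H →ₗ[k] k) (hlam : IsPartialAction k H lam) :
    (lam = Coalgebra.counit (R := k)) ∨
      (∃ a b : ℕ, n = a * b ∧ 2 ≤ a ∧ 2 ≤ b ∧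
        ∀ i j : ℕ, i ≤ n - 1 → j ≤ n - 1 →
          lam (T.g ^ i * T.x ^ j) = if j = 0 ∧ a ∣ i then 1 else 0) ∨
      (∃ α : k, ∀ i j : ℕ, i ≤ n - 1 → j ≤ n - 1 →
        lam (T.g ^ (n - i) * T.x ^ j) =
          (-1 : k) ^ i * q ^ (i * (i + 1) / 2) * qbinom q j (i : ℤ) * α ^ j) := by
  classical
  have hq0 : q ≠ 0 := hq.ne_zero (by omega)
  have hqn : q ^ n = 1 := hq.pow_eq_one
  have hqpow0 : ∀ c : ℕ, q ^ c ≠ 0 := fun c => pow_ne_zero c hq0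
  have l1 : Lv T lam 0 0 = 1 := lv_one T lam hlam
  have len : Lv T lam n 0 = 1 := lv_en T lam hlam
  have lpn := lv_pn T lam
  have M0 := lv_M0 T lam hlam
  have R1 := lv_R1 T lam hlam
  have KR := lv_KR T lam hn hlam
  have e01 : ∀ i, Lv T lam i 0 = 0 ∨ Lv T lam i 0 = 1 := by
    intro i
    have h := M0 i 0
    rw [add_zero, l1, mul_one] at h
    have h2 : Lv T lam i 0 * (Lv T lam i 0 - 1) = 0 := by linear_combination -h
    rcases mul_eq_zero.mp h2 with h3 | h3
    · exact Or.inl h3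
    · exact Or.inr (by linear_combination h3)
  have shift : ∀ i c, Lv T lam i 0 = 1 → Lv T lam (i + c) 0 = Lv T lam c 0 := by
    intro i c h1
    have h := M0 i c
    rw [h1, one_mul, one_mul] at h
    exact h.symm
  have hex : ∃ d, 0 < d ∧ Lv T lam d 0 = 1 := ⟨n, by omega, len⟩
  obtain ⟨a, ⟨hapos, hae⟩, hamin⟩ :
      ∃ a, (0 < a ∧ Lv T lam a 0 = 1) ∧ ∀ m, m < a → ¬(0 < m ∧ Lv T lam m 0 = 1) :=
    ⟨Nat.find hex, Nat.find_spec hex, fun m hm => Nat.find_min hex hm⟩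
  have hmulshift : ∀ t c, Lv T lam (a * t + c) 0 = Lv T lam c 0 := by
    intro t
    induction t with
    | zero => intro c; simp
    | succ t ih =>
      intro c
      have e : a * (t+1) + c = a * t + (a + c) := by ring
      rw [e, ih (a + c), shift a c hae]
  have hdiv : ∀ m, a ∣ m → Lv T lam m 0 = 1 := by
    rintro m ⟨t, rfl⟩
    have h := hmulshift t 0
    rw [add_zero] at h
    rw [h, l1]
  have hdiv' : ∀ m, Lv T lam m 0 = 1 → a ∣ m := by
    intro m hm
    have hmod : Lv T lam (m % a) 0 = 1 := by
      have h := hmulshift (m / a) (m % a)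
      rw [Nat.div_add_mod m a] at h
      rw [← h, hm]
    rcases Nat.eq_zero_or_pos (m % a) with h0 | hpos
    · exact Nat.dvd_of_mod_eq_zero h0
    · exact absurd ⟨hpos, hmod⟩ (hamin (m % a) (Nat.mod_lt m hapos))
  have han : a ∣ n := hdiv' n len
  have e_eq : ∀ m, Lv T lam m 0 = if a ∣ m then 1 else 0 := by
    intro m
    by_cases hd : a ∣ m
    · rw [if_pos hd]; exact hdiv m hd
    · rw [if_neg hd]
      rcases e01 m with h | h
      · exact h
      · exact absurd (hdiv' m h) hd
  have haub : a ≤ n := Nat.le_of_dvd (by omega) han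
  by_cases ha1 : a = 1
  · -- λ = counit
    left
    have rows0 : ∀ c d, Lv T lam c (1 + d) = 0 := by
      intro c d
      have h := R1 0 c d
      simp only [zero_add] at h
      rw [e_eq 1, if_pos (by simp [ha1])] at h
      have h2 : q ^ c * Lv T lam c (1 + d) = 0 := by linear_combination -h
      exact (mul_eq_zero.mp h2).resolve_left (hqpow0 c)
    apply T.basis.ext
    rintro ⟨i, j⟩
    rw [T.basis_eq i j]
    have hcm := Taft.counit_mono T (i : ℕ) (j : ℕ)
    rcases Nat.eq_zero_or_pos (j : ℕ) with hj | hj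
    · rw [hj] at hcm ⊢
      rw [hcm, if_pos rfl]
      have := e_eq (i : ℕ)
      rw [if_pos (by simp [ha1])] at this
      exact this
    · obtain ⟨d, hd⟩ : ∃ d, (j:ℕ) = 1 + d := ⟨(j:ℕ) - 1, by omega⟩
      rw [hd] at hcm ⊢
      rw [hcm, if_neg (by omega)]
      exact rows0 (i:ℕ) d
  · by_cases hann : a = n
    · -- λ = λ_α
      right; right
      refine ⟨Lv T lam 0 1, ?_⟩
      subst hann
      have e1 : Lv T lam 1 0 = 0 := by
        rw [e_eq, if_neg]; intro hd; have := Nat.le_of_dvd one_pos hd; omega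
      have hLn1 : Lv T lam a 1 = Lv T lam 0 1 := by
        have := lpn 0 1; rwa [zero_add] at this
      have hbeta : Lv T lam (a-1) 1 = -(q * Lv T lam 0 1) := by
        have h := KR 1 0
        rw [show 1 + (a-1) = a by omega, e1, len, add_comm 1 0] at h
        rw [hLn1, pow_one] at h
        linear_combination h
      have main : ∀ j, j ≤ a - 1 → ∀ i, i ≤ a - 1 →
          Lv T lam (a - i) j
            = (-1:k)^i * q^(i*(i+1)/2) * qbinom q j (i:ℤ) * (Lv T lam 0 1)^j := by
        intro j
        induction j with
        | zero =>
          intro _ i hi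
          rcases Nat.eq_zero_or_pos i with rfl | hipos
          · simp only [Nat.sub_zero, len, pow_zero, Nat.cast_zero, qbinom_zero_right,
              mul_one, one_mul]
            norm_num
          · rw [e_eq, if_neg (by intro hd; have := Nat.le_of_dvd (by omega) hd; omega)]
            have h2 : qbinom q 0 (i:ℤ) = 0 := by
              show (if (i:ℤ) = 0 then (1:k) else 0) = 0
              rw [if_neg (by exact_mod_cast hipos.ne')]
            rw [h2]; ring
        | succ j ihj =>
          intro hj1 i hi
          have hj' : j ≤ a - 1 := by omega
          have hja : j + 1 ≤ a - 1 := hj1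
          cases i with
          | zero =>
            have h := KR 1 j
            rw [show 1 + (a-1) = a by omega, pow_one] at h
            have hL1 : Lv T lam 1 j
                = (-1:k)^(a-1) * q^((a-1)*(a-1+1)/2) * qbinom q j ((a-1 : ℕ):ℤ)
                  * (Lv T lam 0 1)^j := by
              have := ihj hj' (a-1) le_rfl
              rwa [show a - (a-1) = 1 by omega] at this
            have hCn1 : qbinom q j ((a-1 : ℕ):ℤ) = 0 :=
              qbinom_of_gt q j _ (by push_cast; omega)
            rw [hCn1, mul_zero, zero_mul] at hL1
            have hLaj : Lv T lam a j
                = (-1:k)^0 * q^(0*(0+1)/2) * qbinom q j ((0:ℕ):ℤ) * (Lv T lam 0 1)^j := by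
              have := ihj hj' 0 (by omega)
              rwa [Nat.sub_zero] at this
            simp only [pow_zero, one_mul, Nat.cast_zero, qbinom_zero_right] at hLaj
            rw [hL1, hLaj, hbeta, add_comm 1 j] at h
            -- h : q * Lv a (j+1) = -(q α) * (0 - α^j)
            rw [Nat.sub_zero]
            have hC0 : qbinom q (j+1) ((0:ℕ):ℤ) = 1 := by
              rw [Nat.cast_zero, qbinom_zero_right]
            rw [Nat.cast_zero, qbinom_zero_right]
            apply mul_left_cancel₀ hq0
            rw [h]; ring
          | succ s =>
            have hs1 : s + 1 ≤ a - 1 := hi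
            have h := KR (a - s) j
            rw [show (a - s) + (a - 1) = (a - (s+1)) + a by omega, lpn, lpn, add_comm 1 j] at h
            have hv1 : Lv T lam (a - s) j
                = (-1:k)^s * q^(s*(s+1)/2) * qbinom q j ((s:ℕ):ℤ) * (Lv T lam 0 1)^j :=
              ihj hj' s (by omega)
            have hv2 : Lv T lam (a - (s+1)) j
                = (-1:k)^(s+1) * q^((s+1)*(s+2)/2) * qbinom q j ((s+1 : ℕ):ℤ)
                  * (Lv T lam 0 1)^j := by
              have := ihj hj' (s+1) hs1
              rwa [show (s+1)*((s+1)+1)/2 = (s+1)*(s+2)/2 by norm_num] at this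
            rw [hv1, hv2, hbeta] at h
            -- now h gives q^(a-s) * L (a-(s+1)) (j+1) = RHS scalars
            have pas : qbinom q (j+1) ((s+1 : ℕ):ℤ)
                = qbinom q j ((s:ℕ):ℤ) + q^(s+1) * qbinom q j ((s+1:ℕ):ℤ) := by
              rw [qbinom_succ, show ((s+1:ℕ):ℤ) - 1 = ((s:ℕ):ℤ) by push_cast; ring,
                show (((s+1:ℕ):ℤ)).toNat = s+1 by omega]
            have htri : (s+1)*(s+2)/2 = s*(s+1)/2 + (s+1) := nat_tri s
            have E1 : q^(a-s) * q^((s+1)*(s+2)/2) = q * q^(s*(s+1)/2) := by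
              rw [← pow_add, show a - s + (s+1)*(s+2)/2 = (1 + s*(s+1)/2) + a by omega,
                pow_add, hqn, mul_one, pow_add, pow_one]
            have E2 : q^(a-s) * q^((s+1)*(s+2)/2) * q^(s+1) = q * q^((s+1)*(s+2)/2) := by
              rw [← pow_add, ← pow_add,
                show a - s + (s+1)*(s+2)/2 + (s+1) = (1 + (s+1)*(s+2)/2) + a by omega,
                pow_add, hqn, mul_one, pow_add, pow_one]
            apply mul_left_cancel₀ (hqpow0 (a - s))
            rw [h, pas, show (s+1)*((s+1)+1)/2 = (s+1)*(s+2)/2 by norm_num]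
            have hm1 : (-1:k)^(s+1) = (-1)^s * (-1) := pow_succ (-1) s
            rw [hm1]
            have hal : (Lv T lam 0 1)^(j+1) = (Lv T lam 0 1)^j * Lv T lam 0 1 :=
              pow_succ _ j
            rw [hal]
            linear_combination ((-1:k)^s * (Lv T lam 0 1)^j * Lv T lam 0 1
                * qbinom q j ((s:ℕ):ℤ)) * E1
              + ((-1:k)^s * (Lv T lam 0 1)^j * Lv T lam 0 1
                * qbinom q j ((s+1:ℕ):ℤ)) * E2
      intro i j hi hj
      exact main j hj i hi
    · -- middle case
      right; left
      have ha2 : 2 ≤ a := by omega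
      have haln : a < n := by omega
      have hb2 : 2 ≤ n / a := by
        rcases Nat.lt_or_ge (n / a) 2 with h | h
        · exfalso
          have := Nat.div_mul_cancel han
          interval_cases h' : (n / a) <;> omega
        · exact h
      refine ⟨a, n / a, (Nat.mul_div_cancel' han).symm, ha2, hb2, ?_⟩
      have e1 : Lv T lam 1 0 = 0 := by
        rw [e_eq, if_neg]; intro hd; have := Nat.le_of_dvd one_pos hd; omega
      have hLn1 : Lv T lam n 1 = Lv T lam 0 1 := by
        have := lpn 0 1; rwa [zero_add] at this
      have hbeta : Lv T lam (n-1) 1 = -(q * Lv T lam 0 1) := by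
        have h := KR 1 0
        rw [show 1 + (n-1) = n by omega, e1, len, add_comm 1 0] at h
        rw [hLn1, pow_one] at h
        linear_combination h
      have hea1 : Lv T lam (a+1) 0 = 0 := by
        rw [e_eq, if_neg]
        intro hd
        have h1 : a ∣ 1 := (Nat.dvd_add_right (dvd_refl a)).mp hd
        have := Nat.le_of_dvd one_pos h1; omega
      have hean : Lv T lam (a+n) 0 = 1 := by
        rw [e_eq, if_pos (dvd_add (dvd_refl a) han)]
      have hi1 : q^(a+1) * Lv T lam a 1 = -Lv T lam (n-1) 1 := by
        have h := KR (a+1) 0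
        rw [show (a+1) + (n-1) = a + n by omega, hea1, hean, add_comm 1 0, lpn] at h
        linear_combination h
      have hii : Lv T lam a 1 * Lv T lam 0 1 = Lv T lam a 1 * Lv T lam a 1 := by
        have h := R1 a 0 1
        rw [add_zero, hea1, zero_mul, add_zero] at h
        exact h
      have halpha : Lv T lam 0 1 = 0 := by
        by_contra hα
        have hqa : q ^ a ≠ 1 := hq.pow_ne_one_of_pos_of_lt (by omega) haln
        apply hqa
        have h3 : (q^(a+1) * Lv T lam a 1) * (q^(a+1) * Lv T lam 0 1)
            = (q^(a+1) * Lv T lam a 1) * (q^(a+1) * Lv T lam a 1) := by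
          linear_combination (q^(a+1)*q^(a+1)) * hii
        rw [hi1, hbeta] at h3
        -- h3 : (q α) * (q^{a+1} α) = (q α) * (q α)
        have h4 : q^a * (q * q * (Lv T lam 0 1 * Lv T lam 0 1))
            = 1 * (q * q * (Lv T lam 0 1 * Lv T lam 0 1)) := by
          have : q^(a+1) = q^a * q := pow_succ q a
          rw [this] at h3
          linear_combination h3
        have hne : q * q * (Lv T lam 0 1 * Lv T lam 0 1) ≠ 0 := by
          apply mul_ne_zero (mul_ne_zero hq0 hq0) (mul_ne_zero hα hα)
        field_simp at h4
        exact h4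
      have hβ0 : Lv T lam (n-1) 1 = 0 := by rw [hbeta, halpha]; ring
      have rows0 : ∀ m d, Lv T lam m (1 + d) = 0 := by
        intro m d
        have h := KR (m+1) d
        rw [show (m+1) + (n-1) = m + n by omega, lpn, hβ0, zero_mul] at h
        exact (mul_eq_zero.mp h).resolve_left (hqpow0 (m+1))
      intro i j hi hj
      rcases Nat.eq_zero_or_pos j with rfl | hjpos
      · show Lv T lam i 0 = _
        rw [e_eq]
        by_cases hd : a ∣ i
        · rw [if_pos hd, if_pos ⟨rfl, hd⟩]
        · rw [if_neg hd, if_neg (by tauto)]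
      · obtain ⟨d, rfl⟩ : ∃ d, j = 1 + d := ⟨j - 1, by omega⟩
        show Lv T lam i (1 + d) = _
        rw [rows0 i d, if_neg (by omega)]
theorem pow_eq_pow_mod' {M : Type*} [Monoid M] {g : M} {n : ℕ} (hg : g ^ n = 1) (i : ℕ) :
    g ^ i = g ^ (i % n) := by
  conv_lhs => rw [← Nat.mod_add_div i n, pow_add, pow_mul, hg, one_pow, mul_one]

section Model

variable {k H : Type*} [Field k] [Ring H] [HopfAlgebra k H]
  {n : ℕ} {q : k} (T : TaftData k n q H)
  {A : Type*} [CommRing A] [Algebra k A]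

/-- The representation of `H` on `A` determined by operators `𝒢, 𝒳`. -/
noncomputable def rhoMap (𝒢 𝒳 : Module.End k A) : H →ₗ[k] Module.End k A :=
  T.basis.constr k (fun p => 𝒢 ^ (p.1 : ℕ) * 𝒳 ^ (p.2 : ℕ))

variable {𝒢 𝒳 : Module.End k A}

theorem rhoMap_mono (hn : 0 < n) (hG : 𝒢 ^ n = 1) (hX : 𝒳 ^ n = 0) (i j : ℕ) :
    rhoMap T 𝒢 𝒳 (T.g ^ i * T.x ^ j) = 𝒢 ^ i * 𝒳 ^ j := by
  rcases Nat.lt_or_ge j n with hj | hj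
  · have hb : T.g ^ i * T.x ^ j = T.basis (⟨i % n, Nat.mod_lt _ hn⟩, ⟨j, hj⟩) := by
      rw [T.basis_eq]
      show T.g ^ i * T.x ^ j = T.g ^ (i % n) * T.x ^ j
      rw [← Taft.g_pow_mod]
    rw [hb, rhoMap, Module.Basis.constr_basis]
    show 𝒢 ^ (i % n) * 𝒳 ^ j = 𝒢 ^ i * 𝒳 ^ j
    rw [← pow_eq_pow_mod' hG]
  · rw [Taft.x_pow_eq_zero T hj, mul_zero, map_zero]
    obtain ⟨t, rfl⟩ := Nat.exists_eq_add_of_le hj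
    rw [pow_add, hX, zero_mul, mul_zero]

theorem rhoMap_one (hn : 0 < n) (hG : 𝒢 ^ n = 1) (hX : 𝒳 ^ n = 0) :
    rhoMap T 𝒢 𝒳 (1 : H) = 1 := by
  have h := rhoMap_mono T hn hG hX 0 0
  simpa using h

theorem rhoMap_g (hn : 0 < n) (hG : 𝒢 ^ n = 1) (hX : 𝒳 ^ n = 0) :
    rhoMap T 𝒢 𝒳 T.g = 𝒢 := by
  have h := rhoMap_mono T hn hG hX 1 0
  simpa using h

theorem rhoMap_x (hn : 0 < n) (hG : 𝒢 ^ n = 1) (hX : 𝒳 ^ n = 0) :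
    rhoMap T 𝒢 𝒳 T.x = 𝒳 := by
  have h := rhoMap_mono T hn hG hX 0 1
  simpa using h

theorem rhoMap_mul (hn : 0 < n) (hG : 𝒢 ^ n = 1) (hX : 𝒳 ^ n = 0)
    (hXG : 𝒳 * 𝒢 = q • (𝒢 * 𝒳)) :
    ∀ h y : H, rhoMap T 𝒢 𝒳 (h * y) = rhoMap T 𝒢 𝒳 h * rhoMap T 𝒢 𝒳 y := by
  have main : ∀ p p' : Fin n × Fin n,
      rhoMap T 𝒢 𝒳 (T.basis p * T.basis p')
        = rhoMap T 𝒢 𝒳 (T.basis p) * rhoMap T 𝒢 𝒳 (T.basis p') := by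
    rintro ⟨i, j⟩ ⟨c, d⟩
    rw [T.basis_eq, T.basis_eq, Taft.mono_mul' T, map_smul,
      rhoMap_mono T hn hG hX, rhoMap_mono T hn hG hX, rhoMap_mono T hn hG hX,
      mono_mul q hXG]
  have keyR : ∀ (h : H) (p' : Fin n × Fin n),
      rhoMap T 𝒢 𝒳 (h * T.basis p') = rhoMap T 𝒢 𝒳 h * rhoMap T 𝒢 𝒳 (T.basis p') := by
    intro h p'
    have e1 : rhoMap T 𝒢 𝒳 ∘ₗ LinearMap.mulRight k (T.basis p')
        = LinearMap.mulRight k (rhoMap T 𝒢 𝒳 (T.basis p')) ∘ₗ rhoMap T 𝒢 𝒳 :=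
      T.basis.ext (fun p => by
        simp only [LinearMap.comp_apply, LinearMap.mulRight_apply]
        exact main p p')
    have h2 := LinearMap.congr_fun e1 h
    simpa using h2
  intro h y
  have e2 : rhoMap T 𝒢 𝒳 ∘ₗ LinearMap.mulLeft k h
      = LinearMap.mulLeft k (rhoMap T 𝒢 𝒳 h) ∘ₗ rhoMap T 𝒢 𝒳 :=
    T.basis.ext (fun p' => by
      simp only [LinearMap.comp_apply, LinearMap.mulLeft_apply]
      exact keyR h p')
  have h2 := LinearMap.congr_fun e2 y
  simpa using h2

/-- `h ↦ ((a,b) ↦ ρ h (a*b))`. -/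
noncomputable def Phi1 (ρ : H →ₗ[k] Module.End k A) : H →ₗ[k] A →ₗ[k] A →ₗ[k] A where
  toFun h := (LinearMap.mul k A).compr₂ (ρ h)
  map_add' h h' := by
    ext a b
    simp [LinearMap.compr₂_apply, LinearMap.mul_apply']
  map_smul' c h := by
    ext a b
    simp [LinearMap.compr₂_apply, LinearMap.mul_apply']

theorem Phi1_apply (ρ : H →ₗ[k] Module.End k A) (h : H) (a b : A) :
    Phi1 ρ h a b = ρ h (a * b) := rfl

/-- `(h₁,h₂) ↦ ((a,b) ↦ ρ h₁ a * ρ h₂ b)`. -/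
noncomputable def Bmap (ρ : H →ₗ[k] Module.End k A) :
    H →ₗ[k] H →ₗ[k] A →ₗ[k] A →ₗ[k] A :=
  LinearMap.mk₂ k (fun h₁ h₂ => (LinearMap.mul k A).compl₁₂ (ρ h₁) (ρ h₂))
    (fun h h' h₂ => by
      ext a b; simp [LinearMap.compl₁₂_apply, LinearMap.mul_apply', add_mul])
    (fun c h h₂ => by
      ext a b; simp [LinearMap.compl₁₂_apply, LinearMap.mul_apply', smul_mul_assoc])
    (fun h₁ h h' => by
      ext a b; simp [LinearMap.compl₁₂_apply, LinearMap.mul_apply', mul_add])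
    (fun c h₁ h => by
      ext a b; simp [LinearMap.compl₁₂_apply, LinearMap.mul_apply', mul_smul_comm])

theorem Bmap_apply (ρ : H →ₗ[k] Module.End k A) (h₁ h₂ : H) (a b : A) :
    Bmap ρ h₁ h₂ a b = ρ h₁ a * ρ h₂ b := rfl

/-- `h ↦ ((a,b) ↦ Σ ρ h₁ a * ρ h₂ b)`. -/
noncomputable def Phi2 (ρ : H →ₗ[k] Module.End k A) : H →ₗ[k] A →ₗ[k] A →ₗ[k] A :=
  (TensorProduct.lift (Bmap ρ)) ∘ₗ Coalgebra.comul

theorem Phi2_apply (ρ : H →ₗ[k] Module.End k A) (h : H) :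
    Phi2 ρ h = TensorProduct.lift (Bmap ρ) (Coalgebra.comul h) := rfl

theorem measuring (hn : 0 < n) (hG : 𝒢 ^ n = 1) (hX : 𝒳 ^ n = 0)
    (hXG : 𝒳 * 𝒢 = q • (𝒢 * 𝒳)) (hGalg : ∀ a b : A, 𝒢 (a * b) = 𝒢 a * 𝒢 b)
    (hLeib : ∀ a b : A, 𝒳 (a * b) = 𝒳 a * b + 𝒢 a * 𝒳 b) :
    Phi1 (rhoMap T 𝒢 𝒳) = Phi2 (rhoMap T 𝒢 𝒳) := by
  have hmul := rhoMap_mul T hn hG hX hXG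
  have hone := rhoMap_one T hn hG hX
  have C : ∀ (t : H ⊗[k] H) (c d : H) (a b : A),
      TensorProduct.lift (Bmap (rhoMap T 𝒢 𝒳)) t (rhoMap T 𝒢 𝒳 c a) (rhoMap T 𝒢 𝒳 d b)
        = TensorProduct.lift (Bmap (rhoMap T 𝒢 𝒳)) (t * (c ⊗ₜ[k] d)) a b := by
    intro t
    induction t using TensorProduct.induction_on with
    | zero => intro c d a b; simp
    | tmul h₁ h₂ =>
      intro c d a b
      rw [Algebra.TensorProduct.tmul_mul_tmul, TensorProduct.lift.tmul,
        TensorProduct.lift.tmul, Bmap_apply, Bmap_apply, hmul h₁ c, hmul h₂ d,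
        Module.End.mul_apply, Module.End.mul_apply]
    | add t₁ t₂ ih₁ ih₂ =>
      intro c d a b
      rw [add_mul, map_add, map_add, LinearMap.add_apply, LinearMap.add_apply,
        LinearMap.add_apply, LinearMap.add_apply, ih₁, ih₂]
  have P1 : Phi1 (rhoMap T 𝒢 𝒳) 1 = Phi2 (rhoMap T 𝒢 𝒳) 1 := by
    ext a b
    rw [Phi1_apply, Phi2_apply, hone, Bialgebra.comul_one, Algebra.TensorProduct.one_def,
      TensorProduct.lift.tmul, Bmap_apply, hone]
    simp
  have closure : ∀ h h', Phi1 (rhoMap T 𝒢 𝒳) h = Phi2 (rhoMap T 𝒢 𝒳) h →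
      Phi1 (rhoMap T 𝒢 𝒳) h' = Phi2 (rhoMap T 𝒢 𝒳) h' →
      Phi1 (rhoMap T 𝒢 𝒳) (h * h') = Phi2 (rhoMap T 𝒢 𝒳) (h * h') := by
    intro h h' Ph Ph'
    have Phab : ∀ a b, rhoMap T 𝒢 𝒳 h (a * b)
        = TensorProduct.lift (Bmap (rhoMap T 𝒢 𝒳)) (Coalgebra.comul h) a b :=
      fun a b => by rw [← Phi1_apply, Ph, Phi2_apply]
    have Phab' : ∀ a b, rhoMap T 𝒢 𝒳 h' (a * b)
        = TensorProduct.lift (Bmap (rhoMap T 𝒢 𝒳)) (Coalgebra.comul h') a b :=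
      fun a b => by rw [← Phi1_apply, Ph', Phi2_apply]
    ext a b
    rw [Phi1_apply, Phi2_apply, hmul h h', Module.End.mul_apply, Phab' a b,
      Bialgebra.comul_mul]
    generalize Coalgebra.comul (R := k) h' = t'
    induction t' using TensorProduct.induction_on with
    | zero => simp
    | tmul c d =>
      rw [TensorProduct.lift.tmul, Bmap_apply, Phab (rhoMap T 𝒢 𝒳 c a) (rhoMap T 𝒢 𝒳 d b), C]
    | add t₁ t₂ ih₁ ih₂ =>
      rw [map_add, LinearMap.add_apply, LinearMap.add_apply, map_add, mul_add, map_add,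
        LinearMap.add_apply, LinearMap.add_apply, ih₁, ih₂]
  have Pg : Phi1 (rhoMap T 𝒢 𝒳) T.g = Phi2 (rhoMap T 𝒢 𝒳) T.g := by
    ext a b
    rw [Phi1_apply, Phi2_apply, T.comul_g, TensorProduct.lift.tmul, Bmap_apply,
      rhoMap_g T hn hG hX]
    exact hGalg a b
  have Px : Phi1 (rhoMap T 𝒢 𝒳) T.x = Phi2 (rhoMap T 𝒢 𝒳) T.x := by
    ext a b
    rw [Phi1_apply, Phi2_apply, T.comul_x, map_add, LinearMap.add_apply, LinearMap.add_apply,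
      TensorProduct.lift.tmul, TensorProduct.lift.tmul, Bmap_apply, Bmap_apply,
      rhoMap_x T hn hG hX, rhoMap_g T hn hG hX, hone, Module.End.one_apply]
    exact hLeib a b
  have Ppow : ∀ (h : H), Phi1 (rhoMap T 𝒢 𝒳) h = Phi2 (rhoMap T 𝒢 𝒳) h →
      ∀ t : ℕ, Phi1 (rhoMap T 𝒢 𝒳) (h ^ t) = Phi2 (rhoMap T 𝒢 𝒳) (h ^ t) := by
    intro h Ph t
    induction t with
    | zero => rw [pow_zero]; exact P1
    | succ t ih => rw [pow_succ]; exact closure _ _ ih Ph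
  apply T.basis.ext
  rintro ⟨i, j⟩
  rw [T.basis_eq]
  exact closure _ _ (Ppow T.g Pg (i : ℕ)) (Ppow T.x Px (j : ℕ))

theorem lCont_apply' (lam : H →ₗ[k] k) (h : H) :
    lCont k H lam h
      = (TensorProduct.lid k H) ((TensorProduct.map lam LinearMap.id) (Coalgebra.comul h)) :=
  rfl

/-- The coefficient functional of the model. -/
noncomputable def lamMod (ρ : H →ₗ[k] Module.End k A) (pt : A →ₐ[k] k) (e₀ : A) :
    H →ₗ[k] k :=
  pt.toLinearMap ∘ₗ (ρ.flip e₀)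

theorem lamMod_apply (ρ : H →ₗ[k] Module.End k A) (pt : A →ₐ[k] k) (e₀ : A) (h : H) :
    lamMod ρ pt e₀ h = pt (ρ h e₀) := rfl

theorem lamMod_isPartialAction (hn : 0 < n) (hG : 𝒢 ^ n = 1) (hX : 𝒳 ^ n = 0)
    (hXG : 𝒳 * 𝒢 = q • (𝒢 * 𝒳)) (hGalg : ∀ a b : A, 𝒢 (a * b) = 𝒢 a * 𝒢 b)
    (hLeib : ∀ a b : A, 𝒳 (a * b) = 𝒳 a * b + 𝒢 a * 𝒳 b)
    (pt : A →ₐ[k] k) (e₀ : A) (hpt : pt e₀ = 1) (he₀ : ∀ w : A, e₀ * w = pt w • e₀) :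
    IsPartialAction k H (lamMod (rhoMap T 𝒢 𝒳) pt e₀) := by
  have hmul := rhoMap_mul T hn hG hX hXG
  have hone := rhoMap_one T hn hG hX
  have hmeas := measuring T hn hG hX hXG hGalg hLeib
  constructor
  · rw [lamMod_apply, hone, Module.End.one_apply, hpt]
  · intro h y
    have claim1 : ∀ t : H ⊗[k] H,
        pt (rhoMap T 𝒢 𝒳 ((TensorProduct.lid k H)
              ((TensorProduct.map (lamMod (rhoMap T 𝒢 𝒳) pt e₀) LinearMap.id) t))
            (rhoMap T 𝒢 𝒳 y e₀))
          = pt (TensorProduct.lift (Bmap (rhoMap T 𝒢 𝒳)) t e₀ (rhoMap T 𝒢 𝒳 y e₀)) := by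
      intro t
      induction t using TensorProduct.induction_on with
      | zero => simp
      | tmul h₁ h₂ =>
        rw [TensorProduct.map_tmul, LinearMap.id_apply, TensorProduct.lift.tmul, Bmap_apply,
          map_mul]
        have hlid : (TensorProduct.lid k H) ((lamMod (rhoMap T 𝒢 𝒳) pt e₀ h₁) ⊗ₜ[k] h₂)
            = (lamMod (rhoMap T 𝒢 𝒳) pt e₀ h₁) • h₂ := rfl
        rw [hlid, map_smul, LinearMap.smul_apply, map_smul, lamMod_apply, smul_eq_mul]
      | add t₁ t₂ ih₁ ih₂ =>
        simp only [map_add, LinearMap.add_apply]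
        rw [ih₁, ih₂]
    have hPhi : rhoMap T 𝒢 𝒳 h (e₀ * rhoMap T 𝒢 𝒳 y e₀)
        = TensorProduct.lift (Bmap (rhoMap T 𝒢 𝒳)) (Coalgebra.comul h) e₀
            (rhoMap T 𝒢 𝒳 y e₀) := by
      have h1 := LinearMap.congr_fun hmeas h
      have h2 := LinearMap.congr_fun h1 e₀
      have h3 := LinearMap.congr_fun h2 (rhoMap T 𝒢 𝒳 y e₀)
      rw [Phi1_apply, Phi2_apply] at h3
      exact h3
    calc lamMod (rhoMap T 𝒢 𝒳) pt e₀ h * lamMod (rhoMap T 𝒢 𝒳) pt e₀ y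
        = lamMod (rhoMap T 𝒢 𝒳) pt e₀ y * lamMod (rhoMap T 𝒢 𝒳) pt e₀ h := mul_comm _ _
      _ = pt (rhoMap T 𝒢 𝒳 h (pt (rhoMap T 𝒢 𝒳 y e₀) • e₀)) := by
          rw [lamMod_apply, lamMod_apply, map_smul, map_smul, smul_eq_mul]
      _ = pt (rhoMap T 𝒢 𝒳 h (e₀ * rhoMap T 𝒢 𝒳 y e₀)) := by rw [he₀]
      _ = pt (TensorProduct.lift (Bmap (rhoMap T 𝒢 𝒳)) (Coalgebra.comul h) e₀
              (rhoMap T 𝒢 𝒳 y e₀)) := by rw [hPhi]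
      _ = pt (rhoMap T 𝒢 𝒳 (lCont k H (lamMod (rhoMap T 𝒢 𝒳) pt e₀) h)
              (rhoMap T 𝒢 𝒳 y e₀)) := (claim1 (Coalgebra.comul h)).symm
      _ = lamMod (rhoMap T 𝒢 𝒳) pt e₀ (lCont k H (lamMod (rhoMap T 𝒢 𝒳) pt e₀) h * y) := by
          rw [lamMod_apply, hmul, Module.End.mul_apply, lCont_apply']

end Model
section QArith

variable {k : Type*} [Field k]

theorem qbinom_prim {q : k} {n : ℕ} (hn : 2 ≤ n) (hq : IsPrimitiveRoot q n)
    {ℓ : ℕ} (h0 : 0 < ℓ) (hℓ : ℓ < n) : qbinom q n (ℓ : ℤ) = 0 := by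
  have hfact0 : qfact q n = 0 := by
    have h1 : qnum q n = 0 := hq.geom_sum_eq_zero (by omega)
    have h2 : n = (n - 1) + 1 := by omega
    rw [h2, qfact, ← h2, h1, zero_mul]
  have hnum_ne : ∀ t, 0 < t → t < n → qnum q t ≠ 0 := by
    intro t ht htn hq0
    have hgs : qnum q t * (q - 1) = q ^ t - 1 := geom_sum_mul q t
    rw [hq0, zero_mul] at hgs
    have : q ^ t = 1 := by linear_combination -hgs
    exact hq.pow_ne_one_of_pos_of_lt ht.ne' htn this
  have hfact_ne : ∀ t, t < n → qfact q t ≠ 0 := by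
    intro t htn
    induction t with
    | zero => simp [qfact]
    | succ t ih =>
      rw [qfact]
      exact mul_ne_zero (hnum_ne (t+1) (by omega) htn) (ih (by omega))
  have key := qbinom_mul_qfact q n ℓ (by omega)
  rw [hfact0] at key
  rcases mul_eq_zero.mp key with h | h
  · exact h
  · exact absurd h (mul_ne_zero (hfact_ne ℓ hℓ) (hfact_ne (n - ℓ) (by omega)))

theorem qpow_tri {q : k} {n : ℕ} (hn : 2 ≤ n) (hq : IsPrimitiveRoot q n) :
    q ^ (n * (n - 1) / 2) = (-1 : k) ^ (n - 1) := by
  have hqn : q ^ n = 1 := hq.pow_eq_one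
  obtain ⟨s, hs⟩ : ∃ s, n = s + 1 := ⟨n - 1, by omega⟩
  have hns : n - 1 = s := by omega
  rw [hns]
  rcases Nat.even_or_odd n with he | ho
  · obtain ⟨t, ht⟩ := he
    have e1 : n * s / 2 = t * s := by
      rw [show n * s = 2 * (t * s) by rw [ht]; ring, Nat.mul_div_cancel_left _ (by norm_num)]
    have hqt : q ^ t = -1 := by
      have hsq : q ^ t * q ^ t = 1 := by rw [← pow_add, ← ht, hqn]
      rcases mul_self_eq_one_iff.mp hsq with h | h
      · exact absurd h (hq.pow_ne_one_of_pos_of_lt (by omega) (by omega))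
      · exact h
    rw [e1, pow_mul, hqt]
  · obtain ⟨t, ht⟩ := ho
    have hst : s = t + t := by omega
    have e1 : n * s / 2 = n * t := by
      rw [show n * s = 2 * (n * t) by rw [hst]; ring, Nat.mul_div_cancel_left _ (by norm_num)]
    rw [e1, pow_mul, hqn, one_pow, hst, Even.neg_one_pow ⟨t, rfl⟩]

theorem nat_tri2 (t : ℕ) : (t+1) * t / 2 = t * (t-1) / 2 + t := by
  cases t with
  | zero => rfl
  | succ s =>
    have := nat_tri s
    rw [show (s+1+1) * (s+1) = (s+1)*(s+2) by ring, show s + 1 - 1 = s by omega,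
      show (s+1)*s = s*(s+1) by ring, this]

end QArith

section PiModel

variable {k : Type*} [Field k] {m : ℕ} [NeZero m]

/-- Translation operator, as an algebra homomorphism. -/
noncomputable def GAop (k : Type*) [Field k] (m : ℕ) : (ZMod m → k) →ₐ[k] (ZMod m → k) :=
  Pi.algHom k (fun _ => k) (fun s => Pi.evalAlgHom k (fun _ => k) (s + 1))

theorem GAop_apply (f : ZMod m → k) (s : ZMod m) : GAop k m f s = f (s + 1) := rfl

/-- Translation operator, as an endomorphism. -/
noncomputable def GLop (k : Type*) [Field k] (m : ℕ) : Module.End k (ZMod m → k) :=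
  (GAop k m).toLinearMap

theorem GLop_apply (f : ZMod m → k) (s : ZMod m) : GLop k m f s = f (s + 1) := rfl

/-- The skew-derivation operator. -/
noncomputable def XLop (u : ZMod m → k) : Module.End k (ZMod m → k) :=
  LinearMap.pi (fun s : ZMod m =>
    u s • ((LinearMap.proj (R := k) (φ := fun _ : ZMod m => k) (s+1))
      - (LinearMap.proj (R := k) (φ := fun _ : ZMod m => k) s)))

theorem XLop_apply (u f : ZMod m → k) (s : ZMod m) :
    XLop u f s = u s * (f (s + 1) - f s) := by
  simp [XLop, LinearMap.pi_apply, LinearMap.smul_apply, LinearMap.sub_apply,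
    LinearMap.proj_apply, smul_eq_mul]

theorem GLop_pow_apply (t : ℕ) (f : ZMod m → k) (s : ZMod m) :
    (GLop k m ^ t) f s = f (s + (t : ZMod m)) := by
  induction t generalizing s with
  | zero => simp
  | succ t ih =>
    rw [pow_succ']
    have : (GLop k m * GLop k m ^ t) f s = (GLop k m ^ t) f (s + 1) := rfl
    rw [this, ih]
    congr 1
    push_cast
    ring

theorem GLop_pow_eq_one {N : ℕ} (hdvd : m ∣ N) : GLop k m ^ N = 1 := by
  apply LinearMap.ext
  intro f
  funext s
  rw [GLop_pow_apply, (ZMod.natCast_eq_zero_iff N m).mpr hdvd, add_zero]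
  rfl

theorem GLop_mul_eq (a b : ZMod m → k) : GLop k m (a * b) = GLop k m a * GLop k m b :=
  map_mul (GAop k m) a b

theorem XLop_leib (u a b : ZMod m → k) :
    XLop u (a * b) = XLop u a * b + GLop k m a * XLop u b := by
  funext s
  simp only [XLop_apply, Pi.mul_apply, Pi.add_apply, GLop_apply]
  ring

theorem XLop_comm {q : k} (u : ZMod m → k) (hu : ∀ s, u s = q * u (s + 1)) :
    XLop u * GLop k m = q • (GLop k m * XLop u) := by
  apply LinearMap.ext
  intro f
  funext s
  have lhs : (XLop u * GLop k m) f s = u s * (f (s + 1 + 1) - f (s + 1)) := by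
    rw [Module.End.mul_apply, XLop_apply]; rfl
  have rhs : (q • (GLop k m * XLop u)) f s = q * (u (s+1) * (f (s+1+1) - f (s+1))) := by
    rw [LinearMap.smul_apply, Module.End.mul_apply]
    have : (GLop k m) (XLop u f) s = XLop u f (s+1) := rfl
    rw [Pi.smul_apply, this, XLop_apply, smul_eq_mul]
  rw [lhs, rhs, hu s]
  ring

theorem XLop_zero : XLop (0 : ZMod m → k) = 0 := by
  apply LinearMap.ext
  intro f
  funext s
  rw [XLop_apply]
  simp

/-- The point evaluation at `0`, as an algebra homomorphism. -/
noncomputable def ptEv (k : Type*) [Field k] (m : ℕ) : (ZMod m → k) →ₐ[k] k :=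
  Pi.evalAlgHom k (fun _ => k) (0 : ZMod m)

theorem ptEv_apply (f : ZMod m → k) : ptEv k m f = f 0 := rfl

theorem ptEv_single : ptEv k m (Pi.single (0 : ZMod m) (1:k)) = 1 := by
  rw [ptEv_apply, Pi.single_eq_same]

theorem single_mul (w : ZMod m → k) :
    (Pi.single (0 : ZMod m) (1:k) : ZMod m → k) * w
      = ptEv k m w • (Pi.single (0 : ZMod m) (1:k) : ZMod m → k) := by
  funext s
  rw [Pi.mul_apply, Pi.smul_apply, ptEv_apply, smul_eq_mul]
  by_cases h : s = 0
  · subst h; rw [Pi.single_eq_same]; ring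
  · rw [Pi.single_eq_of_ne h]; ring

end PiModel
section PQ

variable {k : Type*} [Field k] {m : ℕ} [NeZero m]

/-- `f ↦ u · (f ∘ shift)`. -/
noncomputable def Pop (u : ZMod m → k) : Module.End k (ZMod m → k) :=
  LinearMap.mulLeft k u * GLop k m

/-- `f ↦ -u · f`. -/
noncomputable def Qop (u : ZMod m → k) : Module.End k (ZMod m → k) :=
  -(LinearMap.mulLeft k u)

theorem Pop_apply (u f : ZMod m → k) (s : ZMod m) : Pop u f s = u s * f (s + 1) := rfl

theorem Qop_apply (u f : ZMod m → k) (s : ZMod m) : Qop u f s = -(u s * f s) := rfl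

theorem XLop_decomp (u : ZMod m → k) : XLop u = Qop u + Pop u := by
  apply LinearMap.ext
  intro f
  funext s
  rw [XLop_apply, LinearMap.add_apply, Pi.add_apply, Pop_apply, Qop_apply]
  ring

theorem Qop_pow_apply (u : ZMod m → k) (t : ℕ) (f : ZMod m → k) (s : ZMod m) :
    (Qop u ^ t) f s = (-1)^t * (u s)^t * f s := by
  induction t generalizing f with
  | zero => simp
  | succ t ih =>
    rw [pow_succ', Module.End.mul_apply, Qop_apply, ih]
    ring

end PQ

section FullModel

variable {k : Type*} [Field k]

/-- Weight function for the `λ_α` model. -/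
noncomputable def uFun (q α : k) (n : ℕ) : ZMod n → k := fun s => -α * (q^(n-1)) ^ s.val

variable {q : k} {n : ℕ} [NeZero n]

theorem uFun_succ (hn : 2 ≤ n) (hq : IsPrimitiveRoot q n) (α : k) (s : ZMod n) :
    uFun q α n (s + 1) = q^(n-1) * uFun q α n s := by
  haveI : Fact (1 < n) := ⟨by omega⟩
  have hp1 : (q^(n-1)) ^ n = 1 := by
    rw [← pow_mul, mul_comm, pow_mul, hq.pow_eq_one, one_pow]
  have hval : (s + 1 : ZMod n).val = (s.val + 1) % n := by
    rw [ZMod.val_add, ZMod.val_one]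
  show -α * (q^(n-1)) ^ ((s + 1 : ZMod n).val) = q^(n-1) * (-α * (q^(n-1)) ^ s.val)
  rw [hval, ← pow_eq_pow_mod' hp1, pow_succ']
  ring

theorem uFun_q (hn : 2 ≤ n) (hq : IsPrimitiveRoot q n) (α : k) (s : ZMod n) :
    uFun q α n s = q * uFun q α n (s + 1) := by
  rw [uFun_succ hn hq α s, ← mul_assoc]
  have h1 : q * q^(n-1) = 1 := by
    rw [← pow_succ', show n - 1 + 1 = n by omega, hq.pow_eq_one]
  rw [h1, one_mul]

theorem uFun_zero (α : k) : uFun q α n 0 = -α := by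
  show -α * (q^(n-1)) ^ (0 : ZMod n).val = -α
  rw [ZMod.val_zero, pow_zero, mul_one]

theorem Pop_pow_apply (hn : 2 ≤ n) (hq : IsPrimitiveRoot q n) (α : k) (t : ℕ)
    (f : ZMod n → k) (s : ZMod n) :
    (Pop (uFun q α n) ^ t) f s
      = (q^(n-1)) ^ (t * (t-1) / 2) * (uFun q α n s)^t * f (s + (t : ZMod n)) := by
  induction t generalizing f s with
  | zero => simp
  | succ t ih =>
    rw [pow_succ', Module.End.mul_apply, Pop_apply, ih]
    rw [uFun_succ hn hq α s, mul_pow]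
    rw [show (t+1) * (t+1-1) / 2 = t * (t-1) / 2 + t from by
      rw [show t + 1 - 1 = t by omega]; exact nat_tri2 t]
    rw [pow_add]
    have : s + 1 + (t : ZMod n) = s + ((t + 1 : ℕ) : ZMod n) := by push_cast; ring
    rw [this]
    ring

theorem Xfull_pow_n (hn : 2 ≤ n) (hq : IsPrimitiveRoot q n) (α : k) :
    (XLop (uFun q α n)) ^ n = 0 := by
  have hQP : Qop (uFun q α n) * Pop (uFun q α n)
      = q • (Pop (uFun q α n) * Qop (uFun q α n)) := by
    apply LinearMap.ext
    intro f
    funext s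
    rw [Module.End.mul_apply, Qop_apply, Pop_apply, LinearMap.smul_apply, Pi.smul_apply,
      Module.End.mul_apply, Pop_apply, Qop_apply, smul_eq_mul]
    rw [uFun_q hn hq α s]
    ring
  rw [XLop_decomp, qbinom_expand q hQP n, Finset.sum_range_succ]
  have hrange : Finset.range n = Finset.range ((n-1)+1) := by
    rw [Nat.sub_add_cancel (by omega : 1 ≤ n)]
  rw [hrange, Finset.sum_range_succ']
  have hmid : ∀ i ∈ Finset.range (n - 1),
      qbinom q n ((i+1 : ℕ) : ℤ) • (Pop (uFun q α n) ^ (i+1) * Qop (uFun q α n) ^ (n - (i+1)))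
        = 0 := by
    intro i hi
    rw [Finset.mem_range] at hi
    rw [qbinom_prim hn hq (by omega) (by omega), zero_smul]
  rw [Finset.sum_eq_zero hmid, zero_add, Nat.cast_zero, qbinom_zero_right, pow_zero, one_mul,
    one_smul, qbinom_self, one_smul, Nat.sub_self, pow_zero, mul_one, Nat.sub_zero]
  apply LinearMap.ext
  intro f
  funext s
  rw [LinearMap.add_apply, Pi.add_apply, Qop_pow_apply, Pop_pow_apply hn hq α,
    ZMod.natCast_self, add_zero]
  have hpt : ((q^(n-1)) : k) ^ (n * (n-1) / 2) = (-1:k)^(n-1) := by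
    rw [← pow_mul, mul_comm, pow_mul, qpow_tri hn hq]
    rcases Nat.even_or_odd (n-1) with he | ho
    · rw [he.neg_one_pow, one_pow]
    · rw [ho.neg_one_pow, ho.neg_one_pow]
  rw [hpt]
  have hneg : (-1:k)^n = -(-1:k)^(n-1) := by
    conv_lhs => rw [show n = (n-1)+1 from by omega, pow_succ]
    ring
  rw [hneg]
  show _ = (0 : Module.End k (ZMod n → k)) f s
  rw [LinearMap.zero_apply, Pi.zero_apply]
  ring

end FullModel

/-- Theorem 3.1.1: a linear map `λ : T_n(q) → k` is a partial action of the Taft algebra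
`T_n(q)` on `k` if and only if `λ = ε` (the counit, i.e. the global action), or `λ = λ_N^0`
for some non-trivial subgroup `N` of `⟨g⟩ ≅ C_n` (i.e. `{1} ≠ N ≠ ⟨g⟩`; such subgroups are
exactly the `N = ⟨g^a⟩` with `n = a·b`, `2 ≤ a`, `2 ≤ b`, and then `g^i ∈ N ↔ a ∣ i` for
`0 ≤ i ≤ n−1`), or `λ = λ_α` for some `α ∈ k`. -/
theorem thm_3_1_1 {k H : Type*} [Field k] [Ring H] [HopfAlgebra k H]
    {n : ℕ} (hn : 2 ≤ n) {q : k} (hq : IsPrimitiveRoot q n)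
    (T : TaftData k n q H) (lam : H →ₗ[k] k) :
    IsPartialAction k H lam ↔
      (lam = Coalgebra.counit (R := k)) ∨
      (∃ a b : ℕ, n = a * b ∧ 2 ≤ a ∧ 2 ≤ b ∧
        ∀ i j : ℕ, i ≤ n - 1 → j ≤ n - 1 →
          lam (T.g ^ i * T.x ^ j) = if j = 0 ∧ a ∣ i then 1 else 0) ∨
      (∃ α : k, ∀ i j : ℕ, i ≤ n - 1 → j ≤ n - 1 →
        lam (T.g ^ (n - i) * T.x ^ j) =
          (-1 : k) ^ i * q ^ (i * (i + 1) / 2) * qbinom q j (i : ℤ) * α ^ j) := by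
  constructor
  · exact Taft.classify hn hq T lam
  · intro hdisj
    haveI : NeZero n := ⟨by omega⟩
    rcases hdisj with hc | ⟨a, b, hab, ha2, hb2, hval⟩ | ⟨α, hval⟩
    · subst hc
      refine ⟨Bialgebra.counit_one, ?_⟩
      intro h y
      have hid : lCont k H (Coalgebra.counit (R := k) (A := H)) h = h := by
        rw [lCont_apply']
        rw [show (TensorProduct.map (Coalgebra.counit (R := k) (A := H))
              (LinearMap.id : H →ₗ[k] H))
            = LinearMap.rTensor H (Coalgebra.counit (R := k)) from rfl]
        rw [Coalgebra.rTensor_counit_comul]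
        rw [TensorProduct.lid_tmul, one_smul]
      rw [hid, Bialgebra.counit_mul]
    · haveI : NeZero a := ⟨by omega⟩
      have hG : GLop k a ^ n = 1 := GLop_pow_eq_one ⟨b, hab⟩
      have hX : (0 : Module.End k (ZMod a → k)) ^ n = 0 := zero_pow (by omega)
      have hXG : (0 : Module.End k (ZMod a → k)) * GLop k a = q • (GLop k a * 0) := by
        rw [zero_mul, mul_zero, smul_zero]
      have hGalg : ∀ f g : ZMod a → k, GLop k a (f * g) = GLop k a f * GLop k a g :=
        GLop_mul_eq
      have hLeib : ∀ f g : ZMod a → k, (0 : Module.End k (ZMod a → k)) (f * g)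
          = (0 : Module.End k (ZMod a → k)) f * g
            + GLop k a f * (0 : Module.End k (ZMod a → k)) g := by
        intro f g
        rw [LinearMap.zero_apply, LinearMap.zero_apply, LinearMap.zero_apply, zero_mul,
          mul_zero, add_zero]
      have hpa := lamMod_isPartialAction T (by omega) hG hX hXG hGalg hLeib (ptEv k a)
        (Pi.single 0 1) ptEv_single single_mul
      have heq : lam = lamMod (rhoMap T (GLop k a) 0) (ptEv k a) (Pi.single 0 1) := by
        apply T.basis.ext
        rintro ⟨i, j⟩
        rw [T.basis_eq, hval (i:ℕ) (j:ℕ) (by have := i.2; omega) (by have := j.2; omega),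
          lamMod_apply, rhoMap_mono T (by omega) hG hX]
        rcases Nat.eq_zero_or_pos (j : ℕ) with hj | hj
        · rw [hj, pow_zero, mul_one, ptEv_apply, GLop_pow_apply, zero_add]
          by_cases hd : a ∣ (i : ℕ)
          · rw [if_pos ⟨rfl, hd⟩, (ZMod.natCast_eq_zero_iff (i:ℕ) a).mpr hd,
              Pi.single_eq_same]
          · rw [if_neg (fun hcon => hd hcon.2), Pi.single_eq_of_ne
              (fun h0 => hd ((ZMod.natCast_eq_zero_iff (i:ℕ) a).mp h0))]
        · rw [if_neg (by omega), zero_pow (by omega : (j:ℕ) ≠ 0), mul_zero,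
            LinearMap.zero_apply, map_zero]
      rw [heq]
      exact hpa
    · haveI : Fact (1 < n) := ⟨by omega⟩
      have hG : GLop k n ^ n = 1 := GLop_pow_eq_one dvd_rfl
      have hX : XLop (uFun q α n) ^ n = 0 := Xfull_pow_n hn hq α
      have hXG := XLop_comm (q := q) (uFun q α n) (uFun_q hn hq α)
      have hGalg : ∀ f g : ZMod n → k, GLop k n (f * g) = GLop k n f * GLop k n g :=
        GLop_mul_eq
      have hLeib := XLop_leib (k := k) (m := n) (uFun q α n)
      have hpa := lamMod_isPartialAction T (by omega) hG hX hXG hGalg hLeib (ptEv k n)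
        (Pi.single 0 1) ptEv_single single_mul
      have hvm : ∀ i j : ℕ, lamMod (rhoMap T (GLop k n) (XLop (uFun q α n))) (ptEv k n)
          (Pi.single 0 1) (T.g ^ i * T.x ^ j)
          = ((GLop k n ^ i * XLop (uFun q α n) ^ j) (Pi.single 0 1)) 0 := by
        intro i j
        rw [lamMod_apply, rhoMap_mono T (by omega) hG hX, ptEv_apply]
      have hvg : ∀ i : ℕ, lamMod (rhoMap T (GLop k n) (XLop (uFun q α n))) (ptEv k n)
          (Pi.single 0 1) (T.g ^ i * T.x ^ 0)
          = if ((i:ℕ) : ZMod n) = 0 then 1 else 0 := by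
        intro i
        rw [hvm, pow_zero, mul_one, GLop_pow_apply, zero_add, Pi.single_apply]
      have hvx : lamMod (rhoMap T (GLop k n) (XLop (uFun q α n))) (ptEv k n)
          (Pi.single 0 1) (T.g ^ 0 * T.x ^ 1) = α := by
        rw [hvm, pow_zero, one_mul, pow_one, XLop_apply, zero_add, uFun_zero,
          Pi.single_eq_same, Pi.single_eq_of_ne (one_ne_zero : (1 : ZMod n) ≠ 0)]
        ring
      rcases Taft.classify hn hq T _ hpa with hc | ⟨a', b', hab', ha2', hb2', hval'⟩
        | ⟨α', hval'⟩
      · exfalso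
        have h1 := LinearMap.congr_fun hc (T.g ^ 1 * T.x ^ 0)
        rw [hvg 1, Taft.counit_mono] at h1
        rw [if_pos rfl, if_neg (by rw [Nat.cast_one]; exact one_ne_zero)] at h1
        exact zero_ne_one h1
      · exfalso
        have haub : a' < n := by
          have h2 := Nat.mul_le_mul_left a' hb2'
          omega
        have h2 := hval' a' 0 (by omega) (by omega)
        rw [hvg a'] at h2
        rw [if_neg (fun h0 => by
          have hd := (ZMod.natCast_eq_zero_iff a' n).mp h0
          have := Nat.le_of_dvd (by omega : 0 < a') hd
          omega), if_pos ⟨rfl, dvd_refl a'⟩] at h2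
        exact zero_ne_one h2
      · have hαα : α' = α := by
          have h3 := hval' 0 1 (by omega) (by omega)
          rw [Nat.sub_zero, show T.g ^ n = T.g ^ 0 from by rw [T.g_pow_n, pow_zero],
            hvx] at h3
          rw [h3]
          norm_num
        subst hαα
        have heq : lam = lamMod (rhoMap T (GLop k n) (XLop (uFun q α' n))) (ptEv k n)
            (Pi.single 0 1) := by
          apply T.basis.ext
          rintro ⟨i, j⟩
          rw [T.basis_eq]
          have hj' : (j:ℕ) ≤ n - 1 := by have := j.2; omega
          rcases Nat.eq_zero_or_pos (i : ℕ) with hi0 | hip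
          · rw [hi0]
            have e1 := hval 0 (j:ℕ) (by omega) hj'
            have e2 := hval' 0 (j:ℕ) (by omega) hj'
            rw [Nat.sub_zero, show T.g ^ n = T.g ^ 0 from by rw [T.g_pow_n, pow_zero]] at e1 e2
            rw [e1, e2]
          · have e1 := hval (n - (i:ℕ)) (j:ℕ) (by omega) hj'
            have e2 := hval' (n - (i:ℕ)) (j:ℕ) (by omega) hj'
            rw [show n - (n - (i:ℕ)) = (i:ℕ) from by have := i.2; omega] at e1 e2
            rw [e1, e2]
        rw [heq]
        exact hpa
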